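/- For every integer q ≥ 2 and every word w of length k ≥ 1 over an alphabet of q letters, the series Σ_{n=0}^{∞} h_w(n)·q^{−n} converges and equals 1; equivalently, the first hitting probabilities satisfy Σ_{n=0}^{∞} P_h(w,n) = 1. -/

import Mathlib

/-- The `i`-th autocorrelation bit `b_i` of a word `w` (for `1 ≤ i ≤ w.length`):
`1` if the prefix of `w` of length `i` equals the suffix of `w` of length `i`, else `0`. -/
def acorrBit {α : Type*} [DecidableEq α] (w : List α) (i : ℕ) : ℕ :=
  if w.take i = w.drop (w.length - i) then 1 else 0

/-- The inverse autocorrelation polynomial `A_w(x) = ∑_{i=1}^k b_i x^(i-1)`, over `ℝ`. -/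
noncomputable def APolyR {α : Type*} [DecidableEq α] (w : List α) : Polynomial ℝ :=
  ∑ i ∈ Finset.range w.length, Polynomial.C (acorrBit w (i + 1) : ℝ) * Polynomial.X ^ i

/-- The inverse autocorrelation polynomial `A_w(x)`, over `ℂ`. -/
noncomputable def APolyC {α : Type*} [DecidableEq α] (w : List α) : Polynomial ℂ :=
  ∑ i ∈ Finset.range w.length, Polynomial.C (acorrBit w (i + 1) : ℂ) * Polynomial.X ^ i

/-- The recurrence polynomial `P_w(x) = 1 + (x - q)·A_w(x)`, over `ℝ`. -/
noncomputable def PPolyR (q : ℕ) {α : Type*} [DecidableEq α] (w : List α) : Polynomial ℝ :=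
  1 + (Polynomial.X - Polynomial.C (q : ℝ)) * APolyR w

/-- The recurrence polynomial `P_w(x) = 1 + (x - q)·A_w(x)`, over `ℂ`. -/
noncomputable def PPolyC (q : ℕ) {α : Type*} [DecidableEq α] (w : List α) : Polynomial ℂ :=
  1 + (Polynomial.X - Polynomial.C (q : ℂ)) * APolyC w

/-- `h_w(n)`: the number of words of length `n` over `Fin q` whose last `w.length` letters
equal `w` and which contain no other occurrence of `w` as consecutive letters. -/
noncomputable def hitCount (q : ℕ) (w : List (Fin q)) (n : ℕ) : ℕ :=
  Nat.card {l : List (Fin q) // l.length = n ∧ l.drop (n - w.length) = w ∧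
    ∀ p < n - w.length, (l.drop p).take w.length ≠ w}

/-- The first hitting probability `P_h(w,n) = h_w(n+k)/q^(n+k)` where `k = w.length`. -/
noncomputable def hitProb (q : ℕ) (w : List (Fin q)) (n : ℕ) : ℝ :=
  (hitCount q w (n + w.length) : ℝ) / (q : ℝ) ^ (n + w.length)

/-- The constant `C_{w/w'} = ln(1+r)/r` with `r = (A_w(q) − A_{w'}(q))/A_{w'}(q)`. -/
noncomputable def Crat (q : ℕ) (w w' : List (Fin q)) : ℝ :=
  Real.log (1 + ((APolyR w).eval (q : ℝ) - (APolyR w').eval (q : ℝ)) / (APolyR w').eval (q : ℝ)) /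
    (((APolyR w).eval (q : ℝ) - (APolyR w').eval (q : ℝ)) / (APolyR w').eval (q : ℝ))

/-- The partial-fraction coefficient `c_w = 1/P_w'(α_m)`. -/
noncomputable def cwCoef (q : ℕ) (w : List (Fin q)) (αm : ℝ) : ℝ :=
  1 / ((PPolyR q w).derivative.eval αm)


open Filter

section Aux

variable {q : ℕ}

/-- Words of length `n` avoiding `w` everywhere. -/
def AvSet (w : List (Fin q)) (n : ℕ) : Set (List (Fin q)) :=
  {l | l.length = n ∧ ∀ p, (l.drop p).take w.length ≠ w}

/-- Words of length `n` whose unique occurrence of `w` is at the very end. -/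
def HsSet (w : List (Fin q)) (n : ℕ) : Set (List (Fin q)) :=
  {l | l.length = n ∧ l.drop (n - w.length) = w ∧
    ∀ p < n - w.length, (l.drop p).take w.length ≠ w}

lemma hitCount_eq_ncard (w : List (Fin q)) (n : ℕ) :
    hitCount q w n = (HsSet w n).ncard := by
  rw [← Nat.card_coe_set_eq]; rfl

lemma avFinite (w : List (Fin q)) (n : ℕ) : (AvSet w n).Finite :=
  (List.finite_length_eq _ n).subset (fun _ hl => hl.1)

lemma hsFinite (w : List (Fin q)) (n : ℕ) : (HsSet w n).Finite :=
  (List.finite_length_eq _ n).subset (fun _ hl => hl.1)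

lemma ncard_full (n : ℕ) : Nat.card {l : List (Fin q) | l.length = n} = q ^ n := by
  have : Nat.card (List.Vector (Fin q) n) = q ^ n := by
    rw [Nat.card_eq_fintype_card, card_vector, Fintype.card_fin]
  exact this

/-- an occurrence in a prefix is an occurrence. -/
lemma occ_take {α : Type*} {l w : List α} {n p : ℕ} (hk : 1 ≤ w.length)
    (h : ((l.take n).drop p).take w.length = w) :
    (l.drop p).take w.length = w ∧ p + w.length ≤ n := by
  have h1 : (((l.take n).drop p).take w.length).length = w.length := by rw [h]
  rw [List.length_take, List.length_drop, List.length_take] at h1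
  have hpk : p + w.length ≤ n := by omega
  rw [List.drop_take, List.take_take,
    min_eq_left (by omega : w.length ≤ n - p)] at h
  exact ⟨h, hpk⟩

/-- occurrence transfer to a prefix. -/
lemma take_occ {α : Type*} {l w : List α} (n : ℕ) {p : ℕ} (hpk : p + w.length ≤ n) :
    ((l.take n).drop p).take w.length = (l.drop p).take w.length := by
  rw [List.drop_take, List.take_take, min_eq_left (by omega : w.length ≤ n - p)]

end Aux

section Main

variable {q : ℕ} {w : List (Fin q)}

/-- `h_w(m) = 0` for `m < k`. -/
lemma hs_empty (hw : 1 ≤ w.length) {m : ℕ} (hm : m < w.length) : HsSet w m = ∅ := by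
  ext l
  simp only [HsSet, Set.mem_setOf_eq, Set.mem_empty_iff_false, iff_false, not_and]
  intro h1 h2
  exfalso
  have := congrArg List.length h2
  rw [List.length_drop, h1] at this
  omega

/-- The key recurrence: `|A(n+1)| + |H(n+1)| = q * |A(n)|`. -/
lemma key_card (hw : 1 ≤ w.length) (n : ℕ) :
    (AvSet w (n + 1)).ncard + (HsSet w (n + 1)).ncard = q * (AvSet w n).ncard := by
  -- T: words of length n+1 whose first n letters avoid w
  let T : Set (List (Fin q)) :=
    {l | l.length = n + 1 ∧ ∀ p, ((l.take n).drop p).take w.length ≠ w}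
  have hTfin : T.Finite := (List.finite_length_eq _ (n + 1)).subset (fun _ hl => hl.1)
  -- T = Av(n+1) ∪ Hs(n+1)
  have hsplit : T = AvSet w (n + 1) ∪ HsSet w (n + 1) := by
    ext l
    constructor
    · rintro ⟨hlen, havoid⟩
      by_cases hend : l.drop (n + 1 - w.length) = w
      · exact Or.inr ⟨hlen, hend, fun p hp hocc =>
          havoid p ((take_occ n (by omega)).trans hocc)⟩
      · refine Or.inl ⟨hlen, fun p hocc => ?_⟩
        have h1 : ((l.drop p).take w.length).length = w.length := by rw [hocc]
        rw [List.length_take, List.length_drop, hlen] at h1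
        rcases lt_or_eq_of_le (by omega : p ≤ n + 1 - w.length) with hlt | heq
        · exact havoid p (((take_occ n (by omega)).trans hocc))
        · apply hend
          have hdlen : (l.drop p).length ≤ w.length := by
            rw [List.length_drop, hlen]; omega
          rw [List.take_of_length_le hdlen] at hocc
          rw [← heq]; exact hocc
    · rintro (⟨hlen, havoid⟩ | ⟨hlen, hend, havoid⟩)
      · exact ⟨hlen, fun p hocc => havoid p (occ_take hw hocc).1⟩
      · refine ⟨hlen, fun p hocc => ?_⟩
        obtain ⟨hocc', hple⟩ := occ_take hw hocc
        exact havoid p (by omega) hocc'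
  -- disjointness
  have hdisj : Disjoint (AvSet w (n + 1)) (HsSet w (n + 1)) := by
    rw [Set.disjoint_left]
    rintro l ⟨hlen, havoid⟩ ⟨_, hend, _⟩
    apply havoid (n + 1 - w.length)
    have hdlen : (l.drop (n + 1 - w.length)).length ≤ w.length := by
      rw [List.length_drop, hlen]; omega
    rw [List.take_of_length_le hdlen]; exact hend
  -- T is in bijection with Av n × Fin q
  have hmem : ∀ (u : ↥(AvSet w n)) (a : Fin q), (u.1 ++ [a]) ∈ T := by
    rintro ⟨u, hulen, huav⟩ a
    refine ⟨by rw [List.length_append, hulen]; rfl, fun p hocc => ?_⟩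
    have htk : (u ++ [a]).take n = u := by rw [← hulen, List.take_left]
    rw [htk] at hocc
    exact huav p hocc
  have hbij : Nat.card (↥(AvSet w n) × Fin q) = Nat.card ↥T := by
    apply Nat.card_eq_of_bijective (fun x => ⟨x.1.1 ++ [x.2], hmem x.1 x.2⟩)
    constructor
    · rintro ⟨⟨u, hu⟩, a⟩ ⟨⟨u', hu'⟩, a'⟩ h
      have h' : u ++ [a] = u' ++ [a'] := congrArg Subtype.val h
      obtain ⟨h1, h2⟩ := List.append_inj h' (by rw [hu.1, hu'.1])
      simp only [List.cons.injEq] at h2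
      simp [h1, h2.1]
    · rintro ⟨l, hlen, havoid⟩
      have hdl : (l.drop n).length = 1 := by rw [List.length_drop, hlen]; omega
      obtain ⟨a, ha⟩ := List.length_eq_one_iff.mp hdl
      have htl : (l.take n).length = n := by rw [List.length_take, hlen]; omega
      exact ⟨⟨⟨l.take n, htl, fun p hocc => havoid p hocc⟩, a⟩,
        Subtype.ext (show l.take n ++ [a] = l by rw [← ha]; exact List.take_append_drop n l)⟩
  have hcard : T.ncard = q * (AvSet w n).ncard := by
    rw [← Nat.card_coe_set_eq, ← hbij, Nat.card_prod, Nat.card_coe_set_eq,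
      Nat.card_eq_fintype_card, Fintype.card_fin, mul_comm]
  rw [← hcard, hsplit,
    Set.ncard_union_eq hdisj (avFinite w (n + 1)) (hsFinite w (n + 1))]

end Main

section Main2

variable {q : ℕ} {w : List (Fin q)}

lemma av_zero (hw : 1 ≤ w.length) : AvSet w 0 = {([] : List (Fin q))} := by
  ext l
  simp only [AvSet, Set.mem_setOf_eq, Set.mem_singleton_iff, List.length_eq_zero_iff]
  constructor
  · exact fun h => h.1
  · rintro rfl
    refine ⟨rfl, fun p h => ?_⟩
    have := congrArg List.length h
    simp only [List.length_take, List.length_drop, List.length_nil] at this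
    omega

/-- Claim 1: `|A(n)| + ∑_{m ≤ n} h(m) q^(n-m) = q^n`. -/
lemma claim1 (hw : 1 ≤ w.length) (n : ℕ) :
    (AvSet w n).ncard + ∑ m ∈ Finset.range (n + 1), (HsSet w m).ncard * q ^ (n - m)
      = q ^ n := by
  induction n with
  | zero =>
    rw [av_zero hw, Set.ncard_singleton]
    simp [hs_empty hw hw]
  | succ n ih =>
    rw [Finset.sum_range_succ, Nat.sub_self, pow_zero, mul_one]
    have hstep : ∀ m ∈ Finset.range (n + 1),
        (HsSet w m).ncard * q ^ (n + 1 - m) = q * ((HsSet w m).ncard * q ^ (n - m)) := by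
      intro m hm
      rw [Finset.mem_range] at hm
      have h2 : n + 1 - m = (n - m) + 1 := by omega
      rw [h2, pow_succ]; ring
    rw [Finset.sum_congr rfl hstep, ← Finset.mul_sum]
    have hkey := key_card hw n
    calc (AvSet w (n + 1)).ncard +
          (q * ∑ m ∈ Finset.range (n + 1), (HsSet w m).ncard * q ^ (n - m) +
            (HsSet w (n + 1)).ncard)
        = ((AvSet w (n + 1)).ncard + (HsSet w (n + 1)).ncard) +
            q * ∑ m ∈ Finset.range (n + 1), (HsSet w m).ncard * q ^ (n - m) := by ring
      _ = q * (AvSet w n).ncard +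
            q * ∑ m ∈ Finset.range (n + 1), (HsSet w m).ncard * q ^ (n - m) := by rw [hkey]
      _ = q * ((AvSet w n).ncard +
            ∑ m ∈ Finset.range (n + 1), (HsSet w m).ncard * q ^ (n - m)) := by ring
      _ = q ^ (n + 1) := by rw [ih, pow_succ]; ring


/-- Splitting an avoiding word into prefix (avoiding) and arbitrary suffix. -/
lemma av_split (hw : 1 ≤ w.length) (n j : ℕ) :
    (AvSet w (n + j)).ncard ≤ (AvSet w n).ncard * q ^ j := by
  haveI : Finite ↥(AvSet w n) := (avFinite w n).to_subtype
  haveI : Finite ↥{l : List (Fin q) | l.length = j} := (List.finite_length_eq _ j).to_subtype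
  rw [← Nat.card_coe_set_eq (AvSet w (n + j)), ← Nat.card_coe_set_eq (AvSet w n),
    ← ncard_full (q := q) j, ← Nat.card_prod]
  have hmem1 : ∀ x : ↥(AvSet w (n + j)), x.1.take n ∈ AvSet w n :=
    fun x => ⟨by rw [List.length_take, x.2.1]; omega,
      fun p hocc => x.2.2 p (occ_take hw hocc).1⟩
  have hmem2 : ∀ x : ↥(AvSet w (n + j)), x.1.drop n ∈ {l : List (Fin q) | l.length = j} :=
    fun x => by rw [Set.mem_setOf_eq, List.length_drop, x.2.1]; omega
  apply Nat.card_le_card_of_injective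
    (fun x => (⟨x.1.take n, hmem1 x⟩, ⟨x.1.drop n, hmem2 x⟩))
  rintro x y h
  rw [Prod.ext_iff] at h
  have h1 : x.1.take n = y.1.take n := congrArg Subtype.val h.1
  have h2 : x.1.drop n = y.1.drop n := congrArg Subtype.val h.2
  apply Subtype.ext
  rw [← List.take_append_drop n x.1, ← List.take_append_drop n y.1, h1, h2]

/-- The number of words of length `k` different from `w` is `q^k - 1`. -/
lemma ncard_ne (w : List (Fin q)) :
    ({l : List (Fin q) | l.length = w.length ∧ l ≠ w}).ncard = q ^ w.length - 1 := by
  have heq : {l : List (Fin q) | l.length = w.length ∧ l ≠ w}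
      = {l : List (Fin q) | l.length = w.length} \ {w} := by
    ext l; simp [Set.mem_diff, and_comm]
  rw [heq, Set.ncard_diff_singleton_of_mem (by exact rfl),
    ← Nat.card_coe_set_eq, ncard_full]

/-- Appending a full block: the last block cannot equal `w`. -/
lemma av_block (hw : 1 ≤ w.length) (n : ℕ) :
    (AvSet w (n + w.length)).ncard ≤ (AvSet w n).ncard * (q ^ w.length - 1) := by
  haveI : Finite ↥(AvSet w n) := (avFinite w n).to_subtype
  haveI : Finite ↥{l : List (Fin q) | l.length = w.length ∧ l ≠ w} :=
    ((List.finite_length_eq _ w.length).subset (fun _ h => h.1)).to_subtype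
  rw [← Nat.card_coe_set_eq (AvSet w (n + w.length)),
    ← Nat.card_coe_set_eq (AvSet w n), ← ncard_ne w, ← Nat.card_coe_set_eq,
    ← Nat.card_prod]
  have hmem1 : ∀ x : ↥(AvSet w (n + w.length)), x.1.take n ∈ AvSet w n :=
    fun x => ⟨by rw [List.length_take, x.2.1]; omega,
      fun p hocc => x.2.2 p (occ_take hw hocc).1⟩
  have hmem2 : ∀ x : ↥(AvSet w (n + w.length)),
      x.1.drop n ∈ {l : List (Fin q) | l.length = w.length ∧ l ≠ w} := by
    intro x
    have hlen : (x.1.drop n).length = w.length := by rw [List.length_drop, x.2.1]; omega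
    refine ⟨hlen, fun hcon => ?_⟩
    apply x.2.2 n
    rw [List.take_of_length_le hlen.le, hcon]
  apply Nat.card_le_card_of_injective
    (fun x => (⟨x.1.take n, hmem1 x⟩, ⟨x.1.drop n, hmem2 x⟩))
  rintro x y h
  rw [Prod.ext_iff] at h
  have h1 : x.1.take n = y.1.take n := congrArg Subtype.val h.1
  have h2 : x.1.drop n = y.1.drop n := congrArg Subtype.val h.2
  apply Subtype.ext
  rw [← List.take_append_drop n x.1, ← List.take_append_drop n y.1, h1, h2]

/-- Block bound: `|A(m·k + r)| ≤ (q^k − 1)^m · q^r`. -/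
lemma av_bound (hw : 1 ≤ w.length) (m r : ℕ) :
    (AvSet w (m * w.length + r)).ncard ≤ (q ^ w.length - 1) ^ m * q ^ r := by
  induction m with
  | zero =>
    simpa using (av_split hw 0 r).trans (by rw [av_zero hw, Set.ncard_singleton, one_mul])
  | succ m ih =>
    have heq : (m + 1) * w.length + r = (m * w.length + r) + w.length := by ring
    rw [heq]
    calc (AvSet w ((m * w.length + r) + w.length)).ncard
        ≤ (AvSet w (m * w.length + r)).ncard * (q ^ w.length - 1) := av_block hw _
      _ ≤ ((q ^ w.length - 1) ^ m * q ^ r) * (q ^ w.length - 1) :=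
          Nat.mul_le_mul_right _ ih
      _ = (q ^ w.length - 1) ^ (m + 1) * q ^ r := by ring

end Main2

/-- For `q ≥ 2` and a word `w` of length `k ≥ 1`, the series
`∑ h_w(n)·q^(−n)` converges to `1`; equivalently `∑ P_h(w,n) = 1`. -/
theorem stmt19 (q k : ℕ) (hq : 2 ≤ q) (hk : 1 ≤ k) (w : List (Fin q)) (hwlen : w.length = k) :
    HasSum (fun n : ℕ => (hitCount q w n : ℝ) / (q : ℝ) ^ n) 1 ∧
    HasSum (fun n : ℕ => hitProb q w n) 1 := by
  subst hwlen
  have hw : 1 ≤ w.length := hk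
  have hq2 : (2:ℝ) ≤ (q:ℝ) := by exact_mod_cast hq
  have hq0 : (0:ℝ) < (q:ℝ) := by linarith
  have hqn : ∀ n : ℕ, (0:ℝ) < (q:ℝ) ^ n := fun n => pow_pos hq0 n
  -- Step A: partial sums
  have hA : ∀ n : ℕ, ∑ m ∈ Finset.range (n + 1), (hitCount q w m : ℝ) / (q:ℝ) ^ m
      = 1 - ((AvSet w n).ncard : ℝ) / (q:ℝ) ^ n := by
    intro n
    have h1 := claim1 (q := q) hw n
    have h2 : ((AvSet w n).ncard : ℝ) +
        ∑ m ∈ Finset.range (n + 1), ((HsSet w m).ncard : ℝ) * (q:ℝ) ^ (n - m)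
        = (q:ℝ) ^ n := by
      exact_mod_cast congrArg (Nat.cast : ℕ → ℝ) h1
    have h3 : ∑ m ∈ Finset.range (n + 1), (hitCount q w m : ℝ) / (q:ℝ) ^ m
        = ∑ m ∈ Finset.range (n + 1),
            ((HsSet w m).ncard : ℝ) * (q:ℝ) ^ (n - m) / (q:ℝ) ^ n := by
      refine Finset.sum_congr rfl (fun m hm => ?_)
      rw [Finset.mem_range] at hm
      rw [hitCount_eq_ncard, div_eq_div_iff (hqn m).ne' (hqn n).ne']
      rw [show (q:ℝ) ^ n = (q:ℝ) ^ (n - m) * (q:ℝ) ^ m by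
        rw [← pow_add]; congr 1; omega]
      ring
    rw [h3, ← Finset.sum_div]
    have h6 : ∑ m ∈ Finset.range (n + 1), ((HsSet w m).ncard : ℝ) * (q:ℝ) ^ (n - m)
        = (q:ℝ) ^ n - ((AvSet w n).ncard : ℝ) := by linarith
    rw [h6, sub_div, div_self (hqn n).ne']
  -- Step B: the bound
  set c : ℝ := ((q:ℝ) ^ w.length - 1) / (q:ℝ) ^ w.length with hc
  have hqk1 : (1:ℝ) ≤ (q:ℝ) ^ w.length := one_le_pow₀ (by linarith)
  have hc0 : 0 ≤ c := by
    apply div_nonneg (by linarith) (by linarith)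
  have hc1 : c < 1 := by
    rw [hc, div_lt_one (by linarith)]; linarith
  have hB : ∀ n : ℕ, ((AvSet w n).ncard : ℝ) / (q:ℝ) ^ n ≤ c ^ (n / w.length) := by
    intro n
    have hn : n = (n / w.length) * w.length + n % w.length := (Nat.div_add_mod' n w.length).symm
    have hbnd := av_bound (q := q) hw (n / w.length) (n % w.length)
    rw [← hn] at hbnd
    have hcast : ((AvSet w n).ncard : ℝ)
        ≤ ((q:ℝ) ^ w.length - 1) ^ (n / w.length) * (q:ℝ) ^ (n % w.length) := by
      have h4 : (((q ^ w.length - 1) ^ (n / w.length) * q ^ (n % w.length) : ℕ) : ℝ)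
          = ((q:ℝ) ^ w.length - 1) ^ (n / w.length) * (q:ℝ) ^ (n % w.length) := by
        have h5 : ((q ^ w.length - 1 : ℕ) : ℝ) = (q:ℝ) ^ w.length - 1 := by
          rw [Nat.cast_sub (Nat.one_le_two_pow.trans (Nat.pow_le_pow_left hq _))]
          push_cast; ring
        push_cast [h5]; ring
      rw [← h4]
      exact_mod_cast hbnd
    rw [div_le_iff₀ (hqn n)]
    have hpow : c ^ (n / w.length) * (q:ℝ) ^ n
        = ((q:ℝ) ^ w.length - 1) ^ (n / w.length) * (q:ℝ) ^ (n % w.length) := by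
      rw [hc, div_pow]
      rw [show (q:ℝ) ^ n = ((q:ℝ) ^ w.length) ^ (n / w.length) * (q:ℝ) ^ (n % w.length) by
        rw [← pow_mul, ← pow_add]; congr 1
        exact ((Nat.div_add_mod n w.length).symm)]
      field_simp
    rw [hpow]
    exact hcast
  -- Step C: convergence to 0
  have hC : Filter.Tendsto (fun n : ℕ => ((AvSet w n).ncard : ℝ) / (q:ℝ) ^ n)
      Filter.atTop (nhds 0) := by
    apply squeeze_zero (fun n => by positivity) hB
    exact (tendsto_pow_atTop_nhds_zero_of_lt_one hc0 hc1).comp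
      (Nat.tendsto_div_const_atTop (by omega))
  -- partial sums tend to 1
  have hD : Filter.Tendsto
      (fun n : ℕ => ∑ m ∈ Finset.range n, (hitCount q w m : ℝ) / (q:ℝ) ^ m)
      Filter.atTop (nhds 1) := by
    rw [← Filter.tendsto_add_atTop_iff_nat 1]
    simp only [hA]
    simpa using Filter.Tendsto.sub (tendsto_const_nhds (x := (1:ℝ))) hC
  have part1 : HasSum (fun n : ℕ => (hitCount q w n : ℝ) / (q : ℝ) ^ n) 1 := by
    rw [hasSum_iff_tendsto_nat_of_nonneg (fun i => by positivity)]
    exact hD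
  refine ⟨part1, ?_⟩
  have hzero : ∑ i ∈ Finset.range w.length, (hitCount q w i : ℝ) / (q:ℝ) ^ i = 0 := by
    refine Finset.sum_eq_zero (fun i hi => ?_)
    rw [Finset.mem_range] at hi
    rw [hitCount_eq_ncard, hs_empty hw hi, Set.ncard_empty]
    simp
  have := (hasSum_nat_add_iff
    (f := fun n : ℕ => (hitCount q w n : ℝ) / (q : ℝ) ^ n) w.length).mpr
    (by rwa [hzero, add_zero])
  exact this
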